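/- Let y be a nonnegative real random variable on a probability space (Ω,μ) with finite second moment; write m₁ = E[y] and m₂ = E[y²], and assume m₁ > 0. Let δ be a real number with 0 ≤ δ < min(m₂/(2m₁), m₁). Define w = 1 − m₁²/m₂ if δ = 0, and w = (−m₂ + 2δm₁ + √(m₂² − 4δm₂(m₁−δ)))/(2δ²) if δ > 0. Then 0 ≤ w < 1 and Prob(y ≤ δ) ≤ w. -/

import Mathlib

/- STATEMENT 3 (Lemma 2.8): For a nonnegative random variable y with moments m₁ = E[y] > 0,
m₂ = E[y²], and 0 ≤ δ < min(m₂/(2m₁), m₁), setting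
  w = 1 − m₁²/m₂                                                  if δ = 0,
  w = (−m₂ + 2δm₁ + √(m₂² − 4δm₂(m₁−δ)))/(2δ²)                    if δ > 0,
one has 0 ≤ w < 1 and Prob(y ≤ δ) ≤ w. -/

open MeasureTheory

/-- Cauchy–Schwarz for set integrals, via the variational trick. -/
lemma setIntegral_sq_le_aux {Ω : Type*} [MeasurableSpace Ω] (μ : Measure Ω) [IsFiniteMeasure μ]
    (f : Ω → ℝ) (hf : Integrable f μ) (hf2 : Integrable (fun ω => (f ω) ^ 2) μ)
    (S : Set Ω) (hS : MeasurableSet S) :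
    (∫ ω in S, f ω ∂μ) ^ 2 ≤ (μ S).toReal * ∫ ω in S, (f ω) ^ 2 ∂μ := by
  set q : ℝ := (μ S).toReal with hq
  set I : ℝ := ∫ ω in S, f ω ∂μ with hI
  set J : ℝ := ∫ ω in S, (f ω) ^ 2 ∂μ with hJ
  have hqnn : 0 ≤ q := ENNReal.toReal_nonneg
  rcases eq_or_lt_of_le hqnn with hq0 | hqpos
  · -- μ S = 0
    have hS0 : μ S = 0 := by
      have := measure_ne_top μ S
      simpa [hq, ENNReal.toReal_eq_zero_iff, this] using hq0.symm
    have hres : μ.restrict S = 0 := Measure.restrict_eq_zero.mpr hS0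
    have hI0 : I = 0 := by rw [hI, hres, integral_zero_measure]
    have hJ0 : J = 0 := by rw [hJ, hres, integral_zero_measure]
    rw [hI0, hJ0]; simp
  · -- expansion: for any t, 0 ≤ J - 2*t*I + t^2*q
    have key : ∀ t : ℝ, 0 ≤ J - 2 * t * I + t ^ 2 * q := by
      intro t
      have h1 : IntegrableOn (fun ω => (f ω) ^ 2) S μ := hf2.integrableOn
      have h2 : IntegrableOn (fun ω => 2 * t * f ω) S μ := (hf.const_mul _).integrableOn
      have h3 : IntegrableOn (fun _ : Ω => t ^ 2) S μ := (integrableOn_const_iff).mpr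
        (Or.inr (measure_lt_top μ S))
      have h12 : IntegrableOn (fun ω => (f ω) ^ 2 - 2 * t * f ω) S μ := h1.sub h2
      have hexp : ∫ ω in S, (f ω - t) ^ 2 ∂μ = J - 2 * t * I + t ^ 2 * q := by
        have heq : (fun ω => (f ω - t) ^ 2)
            = fun ω => ((f ω) ^ 2 - 2 * t * f ω) + t ^ 2 := by
          funext ω; ring
        rw [heq, integral_add h12 h3, integral_sub h1 h2,
          MeasureTheory.integral_const_mul, setIntegral_const]
        simp [hq, hI, hJ, smul_eq_mul, mul_comm, measureReal_def]
      calc (0:ℝ) ≤ ∫ ω in S, (f ω - t) ^ 2 ∂μ :=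
            integral_nonneg fun ω => sq_nonneg _
        _ = _ := hexp
    have h := key (I / q)
    have hq' : q ≠ 0 := ne_of_gt hqpos
    have e : J - 2 * (I / q) * I + (I / q) ^ 2 * q = J - I ^ 2 / q := by
      field_simp; ring
    rw [e] at h
    have h2 : I ^ 2 / q ≤ J := by linarith
    have h3 : I ^ 2 ≤ J * q := (div_le_iff₀ hqpos).mp h2
    nlinarith [h3]

theorem prob_le_delta_bound
    {Ω : Type*} [MeasurableSpace Ω] (μ : Measure Ω) [IsProbabilityMeasure μ]
    (y : Ω → ℝ) (hy_meas : Measurable y) (hy_nonneg : ∀ ω, 0 ≤ y ω)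
    (hy_int : Integrable y μ)
    (hy_sq_int : Integrable (fun ω => (y ω) ^ 2) μ)
    (m₁ m₂ : ℝ)
    (hm₁ : m₁ = ∫ ω, y ω ∂μ)
    (hm₂ : m₂ = ∫ ω, (y ω) ^ 2 ∂μ)
    (hm₁_pos : 0 < m₁)
    (δ : ℝ) (hδ_nonneg : 0 ≤ δ) (hδ_lt : δ < min (m₂ / (2 * m₁)) m₁)
    (w : ℝ)
    (hw : w = if δ = 0 then 1 - m₁ ^ 2 / m₂
        else (-m₂ + 2 * δ * m₁ + Real.sqrt (m₂ ^ 2 - 4 * δ * m₂ * (m₁ - δ))) / (2 * δ ^ 2)) :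
    0 ≤ w ∧ w < 1 ∧ μ {ω | y ω ≤ δ} ≤ ENNReal.ofReal w := by
  have hδm₁ : δ < m₁ := lt_of_lt_of_le hδ_lt (min_le_right _ _)
  have hδm₂ : δ < m₂ / (2 * m₁) := lt_of_lt_of_le hδ_lt (min_le_left _ _)
  have h2δm₁ : 2 * δ * m₁ < m₂ := by
    have h := (lt_div_iff₀ (by positivity : (0:ℝ) < 2 * m₁)).mp hδm₂
    nlinarith [h]
  -- Cauchy-Schwarz on the whole space: m₁² ≤ m₂
  have hm₁sq : m₁ ^ 2 ≤ m₂ := by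
    have h := setIntegral_sq_le_aux μ y hy_int hy_sq_int Set.univ MeasurableSet.univ
    simpa [hm₁, hm₂, measure_univ] using h
  have hm₂pos : 0 < m₂ := lt_of_lt_of_le (by positivity) hm₁sq
  set A : Set Ω := {ω | y ω ≤ δ} with hA
  have hAmeas : MeasurableSet A := measurableSet_le hy_meas measurable_const
  set p : ℝ := (μ A).toReal with hp
  have hp0 : 0 ≤ p := ENNReal.toReal_nonneg
  have hp1 : p ≤ 1 := by
    rw [hp]
    exact ENNReal.toReal_le_of_le_ofReal zero_le_one (by simpa using prob_le_one (μ := μ) (s := A))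
  have hμAc : (μ Aᶜ).toReal = 1 - p := by
    rw [prob_compl_eq_one_sub hAmeas,
      ENNReal.toReal_sub_of_le prob_le_one ENNReal.one_ne_top]
    simp [hp]
  -- split the mean
  have hsplit : m₁ = (∫ ω in A, y ω ∂μ) + ∫ ω in Aᶜ, y ω ∂μ := by
    rw [hm₁, ← integral_add_compl hAmeas hy_int]
  have hA_bound : (∫ ω in A, y ω ∂μ) ≤ δ * p := by
    have : (∫ ω in A, y ω ∂μ) ≤ ∫ _ω in A, δ ∂μ := by
      apply setIntegral_mono_on hy_int.integrableOn
        ((integrableOn_const_iff).mpr (Or.inr (measure_lt_top μ A))) hAmeas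
      intro ω hω; exact hω
    rw [setIntegral_const] at this
    simpa [smul_eq_mul, mul_comm, measureReal_def] using this
  have hAc_bound : (∫ ω in Aᶜ, y ω ∂μ) ≤ Real.sqrt (m₂ * (1 - p)) := by
    have hcs := setIntegral_sq_le_aux μ y hy_int hy_sq_int Aᶜ hAmeas.compl
    have hJle : (∫ ω in Aᶜ, (y ω) ^ 2 ∂μ) ≤ m₂ := by
      rw [hm₂]
      exact setIntegral_le_integral hy_sq_int (Filter.Eventually.of_forall fun ω => sq_nonneg _)
    have hInn : 0 ≤ ∫ ω in Aᶜ, y ω ∂μ :=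
      setIntegral_nonneg hAmeas.compl fun ω _ => hy_nonneg ω
    have hle : (∫ ω in Aᶜ, y ω ∂μ) ^ 2 ≤ m₂ * (1 - p) := by
      rw [hμAc] at hcs
      calc (∫ ω in Aᶜ, y ω ∂μ) ^ 2 ≤ (1 - p) * ∫ ω in Aᶜ, (y ω) ^ 2 ∂μ := hcs
        _ ≤ m₂ * (1 - p) := by
            have h1p : 0 ≤ 1 - p := by linarith
            nlinarith [hJle, h1p]
    exact (Real.le_sqrt hInn (by nlinarith [hInn, hle])).mpr hle
  have hkey : m₁ - δ * p ≤ Real.sqrt (m₂ * (1 - p)) := by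
    rw [hsplit]; linarith
  have hlhs_nn : 0 ≤ m₁ - δ * p := by nlinarith [hδm₁, hp1, hδ_nonneg]
  have hquad : (m₁ - δ * p) ^ 2 ≤ m₂ * (1 - p) := by
    have hrhs_nn : 0 ≤ m₂ * (1 - p) := mul_nonneg hm₂pos.le (by linarith)
    exact (Real.le_sqrt hlhs_nn hrhs_nn).mp hkey
  -- now case on δ
  have hμA_eq : μ A = ENNReal.ofReal p := (ENNReal.ofReal_toReal (measure_ne_top μ A)).symm
  rcases eq_or_lt_of_le hδ_nonneg with hδ0 | hδpos
  · -- δ = 0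
    rw [hw, if_pos hδ0.symm]
    have hple : p ≤ 1 - m₁ ^ 2 / m₂ := by
      rw [← hδ0] at hquad
      simp only [mul_zero, zero_mul, sub_zero] at hquad
      have hd : m₁ ^ 2 / m₂ ≤ 1 - p := (div_le_iff₀ hm₂pos).mpr (by nlinarith [hquad])
      linarith
    refine ⟨le_trans hp0 hple, ?_, ?_⟩
    · have : 0 < m₁ ^ 2 / m₂ := by positivity
      linarith
    · rw [hμA_eq]; exact ENNReal.ofReal_le_ofReal hple
  · -- δ > 0
    rw [hw, if_neg (ne_of_gt hδpos)]
    have hDnn : 0 ≤ m₂ ^ 2 - 4 * δ * m₂ * (m₁ - δ) := by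
      nlinarith [sq_nonneg (m₂ - 2 * δ * m₁), hm₁sq, sq_nonneg δ]
    set s := Real.sqrt (m₂ ^ 2 - 4 * δ * m₂ * (m₁ - δ)) with hs
    have hsnn : 0 ≤ s := Real.sqrt_nonneg _
    have hs2 : s ^ 2 = m₂ ^ 2 - 4 * δ * m₂ * (m₁ - δ) := Real.sq_sqrt hDnn
    clear_value s
    have hple : p ≤ (-m₂ + 2 * δ * m₁ + s) / (2 * δ ^ 2) := by
      rw [le_div_iff₀ (by positivity)]
      have hLpos : 0 ≤ 2 * δ ^ 2 * p + m₂ - 2 * δ * m₁ := by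
        linarith only [mul_nonneg (sq_nonneg δ) hp0, h2δm₁]
      have hLsq : (2 * δ ^ 2 * p + m₂ - 2 * δ * m₁) ^ 2 ≤ s ^ 2 := by
        rw [hs2]
        have h4 : 4 * δ ^ 2 * ((m₁ - δ * p) ^ 2 - m₂ * (1 - p)) ≤ 0 :=
          mul_nonpos_of_nonneg_of_nonpos (by positivity) (by linarith)
        linarith only [h4]
      have hL : 2 * δ ^ 2 * p + m₂ - 2 * δ * m₁ ≤ s :=
        (pow_le_pow_iff_left₀ hLpos hsnn two_ne_zero).mp hLsq
      linarith
    refine ⟨le_trans hp0 hple, ?_, ?_⟩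
    · rw [div_lt_one (by positivity)]
      have hR : 0 < 2 * δ ^ 2 + m₂ - 2 * δ * m₁ := by linarith only [sq_nonneg δ, h2δm₁]
      have h4 : 0 < 4 * δ ^ 2 * (m₁ - δ) ^ 2 :=
        mul_pos (by positivity) (pow_pos (sub_pos.mpr hδm₁) 2)
      have hslt : s < 2 * δ ^ 2 + m₂ - 2 * δ * m₁ := by
        refine (pow_lt_pow_iff_left₀ hsnn hR.le two_ne_zero).mp ?_
        rw [hs2]; linarith only [h4,
          (by ring : (2 * δ ^ 2 + m₂ - 2 * δ * m₁) ^ 2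
            = m₂ ^ 2 - 4 * δ * m₂ * (m₁ - δ) + 4 * δ ^ 2 * (m₁ - δ) ^ 2)]
      linarith
    · rw [hμA_eq]; exact ENNReal.ofReal_le_ofReal hple
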